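/- Fix an integer c ≥ 2 and let G be a finite double tree with no c-balanced double tree decomposition that has the minimum number of vertices among all such double trees. If v is a vertex of G of degree 2, then the two neighbours x and y of v are distinct, both x and y are big, and d_G(x) ≡ d_G(y) ≡ c + 1 (mod 2). -/

import Mathlib

/-- A multigraph without loops: edges `E` with an endpoint map into unordered
pairs of vertices, no edge being a loop. -/
structure Multigraph (V : Type*) (E : Type*) where
  ends : E → Sym2 V
  loopless : ∀ e, ¬ (ends e).IsDiag

namespace Multigraph

variable {V E : Type*}

/-- `a` and `b` are joined by an edge belonging to the edge set `S`. -/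
def Adj (G : Multigraph V E) (S : Set E) (a b : V) : Prop :=
  ∃ e ∈ S, G.ends e = s(a, b)

/-- Reachability in the spanning subgraph with edge set `S`. -/
def Reachable (G : Multigraph V E) (S : Set E) (a b : V) : Prop :=
  Relation.ReflTransGen (G.Adj S) a b

/-- The spanning subgraph with edge set `S` is connected. -/
def Connected (G : Multigraph V E) (S : Set E) : Prop :=
  ∀ a b : V, G.Reachable S a b

/-- The spanning subgraph with edge set `S` is acyclic: every edge of `S`
is a bridge of `S`. -/
def Acyclic (G : Multigraph V E) (S : Set E) : Prop :=
  ∀ e ∈ S, ∀ a b : V, G.ends e = s(a, b) → ¬ G.Reachable (S \ {e}) a b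

/-- `S` is the edge set of a spanning tree: connected and acyclic. -/
def IsSpanningTree (G : Multigraph V E) (S : Set E) : Prop :=
  G.Connected S ∧ G.Acyclic S

/-- The edges of `S` incident to `v`. -/
def incEdges (G : Multigraph V E) (S : Set E) (v : V) : Set E :=
  {e ∈ S | v ∈ G.ends e}

/-- The degree of `v` in the spanning subgraph with edge set `S`. -/
noncomputable def deg (G : Multigraph V E) (S : Set E) (v : V) : ℕ :=
  (G.incEdges S v).ncard

/-- `T1, T2` form a double tree decomposition of `G`: they partition the
edges of `G` and are both spanning trees. -/
def IsDTD (G : Multigraph V E) (T1 T2 : Set E) : Prop :=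
  T1 ∪ T2 = Set.univ ∧ Disjoint T1 T2 ∧ G.IsSpanningTree T1 ∧ G.IsSpanningTree T2

/-- `G` is a double tree: the edge-disjoint union of two spanning trees. -/
def IsDoubleTree (G : Multigraph V E) : Prop :=
  ∃ T1 T2, G.IsDTD T1 T2

/-- A decomposition into two spanning subgraphs is `c`-balanced if at each
vertex the two degrees differ by at most `c`. -/
def Balanced (G : Multigraph V E) (c : ℕ) (S1 S2 : Set E) : Prop :=
  ∀ v : V, |(G.deg S1 v : ℤ) - (G.deg S2 v : ℤ)| ≤ (c : ℤ)

end Multigraph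

namespace Multigraph

variable {V E : Type*}

/-- `G` admits no `c`-balanced double tree decomposition. -/
def NoBalancedDTD (c : ℕ) (G : Multigraph V E) : Prop :=
  ¬ ∃ T1 T2 : Set E, G.IsDTD T1 T2 ∧ G.Balanced c T1 T2

/-- `v` is big: its degree exceeds `c + 2`. -/
def Big (G : Multigraph V E) (c : ℕ) (v : V) : Prop :=
  c + 2 < G.deg Set.univ v

/-- `v` is small: its degree is at most `c + 2`. -/
def Small (G : Multigraph V E) (c : ℕ) (v : V) : Prop :=
  G.deg Set.univ v ≤ c + 2

/-- `u` and `z` are joined by a double edge. -/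
def DoubleEdge (G : Multigraph V E) (u z : V) : Prop :=
  ∃ e1 e2 : E, e1 ≠ e2 ∧ G.ends e1 = s(u, z) ∧ G.ends e2 = s(u, z)

/-- `u` is a bad 3-vertex: it has degree 3, a small neighbour, and is joined
to a big vertex by a double edge. -/
def Bad3 (G : Multigraph V E) (c : ℕ) (u : V) : Prop :=
  G.deg Set.univ u = 3 ∧
  (∃ w, G.Adj Set.univ u w ∧ G.Small c w) ∧
  (∃ z, G.DoubleEdge u z ∧ G.Big c z)

/-- `u` is a poor 3-vertex: it has degree 3 and three distinct neighbours,
two big and one small. -/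
def Poor3 (G : Multigraph V E) (c : ℕ) (u : V) : Prop :=
  G.deg Set.univ u = 3 ∧
  ∃ x y s : V, x ≠ y ∧ x ≠ s ∧ y ≠ s ∧
    G.Adj Set.univ u x ∧ G.Adj Set.univ u y ∧ G.Adj Set.univ u s ∧
    G.Big c x ∧ G.Big c y ∧ G.Small c s

end Multigraph

namespace Multigraph

section Basic

variable {V E : Type*} {G : Multigraph V E}

lemma ne_of_ends {e : E} {a b : V} (h : G.ends e = s(a, b)) : a ≠ b := by
  intro hab
  exact G.loopless e (by rw [h, hab]; exact Sym2.mk_isDiag_iff.mpr rfl)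

lemma adj_symm {S : Set E} {a b : V} (h : G.Adj S a b) : G.Adj S b a := by
  obtain ⟨e, he, h2⟩ := h
  exact ⟨e, he, by rw [h2, Sym2.eq_swap]⟩

lemma reachable_symm {S : Set E} {a b : V} (h : G.Reachable S a b) :
    G.Reachable S b a :=
  haveI : Std.Symm (G.Adj S) := ⟨fun _ _ h => adj_symm h⟩
  Std.Symm.symm (r := Relation.ReflTransGen (G.Adj S)) a b h

lemma reachable_mono {S S' : Set E} (hss : S ⊆ S') {a b : V} (h : G.Reachable S a b) :
    G.Reachable S' a b := by
  induction h with
  | refl => exact .refl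
  | tail _ h2 ih =>
      obtain ⟨e, he, h3⟩ := h2
      exact ih.tail ⟨e, hss he, h3⟩

lemma exists_incident_of_reachable {S : Set E} {a b : V} (h : G.Reachable S a b)
    (hab : a ≠ b) : ∃ e ∈ S, a ∈ G.ends e := by
  rcases h.cases_head with rfl | ⟨c, ⟨e, he, h3⟩, _⟩
  · exact absurd rfl hab
  · exact ⟨e, he, by rw [h3]; exact Sym2.mem_mk_left a c⟩

lemma one_le_deg [Finite E] {S : Set E} {a b : V} (h : G.Reachable S a b) (hab : a ≠ b) :
    1 ≤ G.deg S a := by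
  obtain ⟨e, he, hme⟩ := exists_incident_of_reachable h hab
  have : (G.incEdges S a).Nonempty := ⟨e, he, hme⟩
  exact (Set.ncard_pos (Set.toFinite _)).mpr this

lemma incEdges_union {S1 S2 : Set E} {u : V} :
    G.incEdges (S1 ∪ S2) u = G.incEdges S1 u ∪ G.incEdges S2 u := by
  ext e; simp only [incEdges, Set.mem_union, Set.mem_setOf_eq]; tauto

lemma deg_union [Finite E] {S1 S2 : Set E} (hdisj : Disjoint S1 S2) (u : V) :
    G.deg (S1 ∪ S2) u = G.deg S1 u + G.deg S2 u := by
  unfold deg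
  rw [incEdges_union, Set.ncard_union_eq ?_ (Set.toFinite _) (Set.toFinite _)]
  exact Set.disjoint_of_subset (fun e he => he.1) (fun e he => he.1) hdisj

lemma deg_add_deg [Finite E] {S1 S2 : Set E} (hdisj : Disjoint S1 S2)
    (hu : S1 ∪ S2 = Set.univ) (u : V) :
    G.deg S1 u + G.deg S2 u = G.deg Set.univ u := by
  rw [← deg_union hdisj, hu]

end Basic

section MapEquiv

variable {V E V₂ E₂ : Type*}

lemma sym2_map_equiv_eq_iff (f : V ≃ V₂) (z : Sym2 V) (a b : V₂) :
    z.map f = s(a, b) ↔ z = s(f.symm a, f.symm b) := by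
  constructor
  · intro h
    have h2 := congrArg (Sym2.map f.symm) h
    rw [Sym2.map_map, Sym2.map_pair_eq] at h2
    rw [← h2]
    have : (⇑f.symm ∘ ⇑f) = id := by ext u; simp
    rw [this, Sym2.map_id, id_eq]
  · rintro rfl
    rw [Sym2.map_pair_eq]
    simp

/-- Transport a multigraph along bijections of vertices and edges. -/
def mapEquiv (G : Multigraph V E) (f : V ≃ V₂) (g : E ≃ E₂) : Multigraph V₂ E₂ where
  ends e := (G.ends (g.symm e)).map f
  loopless e := by
    rw [Sym2.isDiag_map f.injective]
    exact G.loopless _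

variable (G : Multigraph V E) (f : V ≃ V₂) (g : E ≃ E₂)

lemma mapEquiv_adj {S₂ : Set E₂} {a b : V₂} :
    (G.mapEquiv f g).Adj S₂ a b ↔ G.Adj (g ⁻¹' S₂) (f.symm a) (f.symm b) := by
  constructor
  · rintro ⟨e, he, hends⟩
    exact ⟨g.symm e, by simpa using he, (sym2_map_equiv_eq_iff f _ a b).mp hends⟩
  · rintro ⟨e, he, hends⟩
    refine ⟨g e, he, ?_⟩
    show (G.ends (g.symm (g e))).map f = _
    rw [g.symm_apply_apply, hends, Sym2.map_pair_eq]
    simp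

lemma mapEquiv_reachable {S₂ : Set E₂} {a b : V₂} :
    (G.mapEquiv f g).Reachable S₂ a b ↔ G.Reachable (g ⁻¹' S₂) (f.symm a) (f.symm b) := by
  constructor
  · intro h
    exact Relation.ReflTransGen.lift f.symm
      (fun p q hpq => (mapEquiv_adj G f g).mp hpq) _ _ h
  · intro h
    have := Relation.ReflTransGen.lift f
      (fun p q hpq => ((mapEquiv_adj G f g).mpr (by simpa using hpq) :
        (G.mapEquiv f g).Adj S₂ (f p) (f q))) _ _ h
    simpa [Function.onFun, Reachable] using this

lemma mapEquiv_connected {S₂ : Set E₂} :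
    (G.mapEquiv f g).Connected S₂ ↔ G.Connected (g ⁻¹' S₂) := by
  constructor
  · intro h a b
    have := (mapEquiv_reachable G f g).mp (h (f a) (f b))
    simpa using this
  · intro h a b
    exact (mapEquiv_reachable G f g).mpr (h _ _)

lemma mapEquiv_acyclic {S₂ : Set E₂} :
    (G.mapEquiv f g).Acyclic S₂ ↔ G.Acyclic (g ⁻¹' S₂) := by
  constructor
  · intro h e he a b hends hr
    refine h (g e) (by simpa using he) (f a) (f b) ?_ ?_
    · show (G.ends (g.symm (g e))).map f = _
      rw [g.symm_apply_apply, hends, Sym2.map_pair_eq]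
    · rw [mapEquiv_reachable]
      simp only [f.symm_apply_apply]
      have : g ⁻¹' (S₂ \ {g e}) = (g ⁻¹' S₂) \ {e} := by
        ext e'; simp [g.injective.eq_iff]
      rwa [this]
  · intro h e he a b hends hr
    refine h (g.symm e) (by simpa using he) (f.symm a) (f.symm b)
      ((sym2_map_equiv_eq_iff f _ a b).mp hends) ?_
    have := (mapEquiv_reachable G f g).mp hr
    have heq : g ⁻¹' (S₂ \ {e}) = (g ⁻¹' S₂) \ {g.symm e} := by
      ext e'; constructor
      · rintro ⟨hm, hne⟩
        exact ⟨hm, by rintro rfl; exact hne (by simp)⟩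
      · rintro ⟨hm, hne⟩
        refine ⟨hm, ?_⟩
        simp only [Set.mem_singleton_iff] at hne ⊢
        intro hh; apply hne; rw [← hh]; simp
    rwa [heq] at this

lemma mapEquiv_incEdges {S₂ : Set E₂} {a : V₂} :
    (G.mapEquiv f g).incEdges S₂ a = g.symm ⁻¹' (G.incEdges (g ⁻¹' S₂) (f.symm a)) := by
  ext e
  simp only [incEdges, Set.mem_setOf_eq, Set.mem_preimage]
  constructor
  · rintro ⟨he, hm⟩
    refine ⟨by simpa using he, ?_⟩
    rw [show (G.mapEquiv f g).ends e = (G.ends (g.symm e)).map f from rfl, Sym2.mem_map] at hm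
    obtain ⟨u, hu, hfu⟩ := hm
    rwa [show f.symm a = u by rw [← hfu]; simp]
  · rintro ⟨he, hm⟩
    refine ⟨by simpa using he, ?_⟩
    rw [show (G.mapEquiv f g).ends e = (G.ends (g.symm e)).map f from rfl, Sym2.mem_map]
    exact ⟨f.symm a, hm, by simp⟩

lemma mapEquiv_deg {S₂ : Set E₂} {a : V₂} :
    (G.mapEquiv f g).deg S₂ a = G.deg (g ⁻¹' S₂) (f.symm a) := by
  unfold deg
  rw [mapEquiv_incEdges]
  have : (g.symm ⁻¹' (G.incEdges (g ⁻¹' S₂) (f.symm a)))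
      = g '' (G.incEdges (g ⁻¹' S₂) (f.symm a)) := by
    ext e'; simp only [Set.mem_preimage, Set.mem_image]
    constructor
    · intro h; exact ⟨g.symm e', h, by simp⟩
    · rintro ⟨e, he, rfl⟩; simpa using he
  rw [this, Set.ncard_image_of_injective _ g.injective]

lemma mapEquiv_isDTD {S₂ T₂ : Set E₂} :
    (G.mapEquiv f g).IsDTD S₂ T₂ ↔ G.IsDTD (g ⁻¹' S₂) (g ⁻¹' T₂) := by
  unfold IsDTD IsSpanningTree
  rw [mapEquiv_connected, mapEquiv_connected, mapEquiv_acyclic, mapEquiv_acyclic]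
  constructor
  · rintro ⟨hu, hd, h3, h4⟩
    refine ⟨?_, ?_, h3, h4⟩
    · rw [← Set.preimage_union, hu]; rfl
    · exact hd.preimage g
  · rintro ⟨hu, hd, h3, h4⟩
    refine ⟨?_, ?_, h3, h4⟩
    · have := congrArg (Set.image g) (Set.preimage_union (f := g) (s := S₂) (t := T₂) ▸ hu)
      rw [Set.image_preimage_eq _ g.surjective, Set.image_univ,
        Set.range_eq_univ.mpr g.surjective] at this
      exact this
    · rw [Set.disjoint_iff_inter_eq_empty] at hd ⊢
      have := congrArg (Set.image g) ((Set.preimage_inter (f := g)).symm ▸ hd)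
      rwa [Set.image_preimage_eq _ g.surjective, Set.image_empty] at this

lemma mapEquiv_balanced {c : ℕ} {S₂ T₂ : Set E₂} :
    (G.mapEquiv f g).Balanced c S₂ T₂ ↔ G.Balanced c (g ⁻¹' S₂) (g ⁻¹' T₂) := by
  constructor
  · intro h u
    have := h (f u)
    rwa [mapEquiv_deg, mapEquiv_deg, f.symm_apply_apply] at this
  · intro h u
    rw [mapEquiv_deg, mapEquiv_deg]
    exact h _

end MapEquiv

section Suppress

variable {V E : Type*}

/-- Delete the vertex `v`, all of whose incident edges are `e1` and `e2`. -/
def suppress (G : Multigraph V E) (v : V) (e1 e2 : E)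
    (hv : ∀ e : E, v ∈ G.ends e → e = e1 ∨ e = e2) :
    Multigraph {u : V // u ≠ v} {e : E // e ≠ e1 ∧ e ≠ e2} where
  ends e := (G.ends e.1).attachWith (P := (· ≠ v)) (fun a ha hav => by
    rcases hv e.1 (hav ▸ ha) with h | h
    exacts [e.2.1 h, e.2.2 h])
  loopless e h := G.loopless e.1 (by
    have h2 := Sym2.IsDiag.map (f := (Subtype.val : {a : V // a ≠ v} → V)) h
    rwa [Sym2.attachWith_map_subtypeVal] at h2)

variable {G : Multigraph V E} {v : V} {e1 e2 : E}
  {hv : ∀ e : E, v ∈ G.ends e → e = e1 ∨ e = e2}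

lemma suppress_ends_val (e' : {e : E // e ≠ e1 ∧ e ≠ e2}) :
    ((suppress G v e1 e2 hv).ends e').map Subtype.val = G.ends e'.1 :=
  Sym2.attachWith_map_subtypeVal _

lemma suppress_ends_eq_iff {e' : {e : E // e ≠ e1 ∧ e ≠ e2}} {a b : {u : V // u ≠ v}} :
    (suppress G v e1 e2 hv).ends e' = s(a, b) ↔ G.ends e'.1 = s(a.1, b.1) := by
  constructor
  · intro h
    rw [← suppress_ends_val (hv := hv) e', h, Sym2.map_pair_eq]
  · intro h
    apply Sym2.map.injective Subtype.val_injective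
    rw [suppress_ends_val, h, Sym2.map_pair_eq]

lemma suppress_mem_ends {e' : {e : E // e ≠ e1 ∧ e ≠ e2}} {a : {u : V // u ≠ v}} :
    a ∈ (suppress G v e1 e2 hv).ends e' ↔ a.1 ∈ G.ends e'.1 := by
  rw [← suppress_ends_val (hv := hv) e', Sym2.mem_map]
  constructor
  · intro h; exact ⟨a, h, rfl⟩
  · rintro ⟨u, hu, huv⟩
    rwa [show a = u from Subtype.val_injective huv.symm]

lemma suppress_adj {S' : Set {e : E // e ≠ e1 ∧ e ≠ e2}} {a b : {u : V // u ≠ v}} :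
    (suppress G v e1 e2 hv).Adj S' a b ↔ G.Adj (Subtype.val '' S') a.1 b.1 := by
  constructor
  · rintro ⟨e', he', h⟩
    exact ⟨e'.1, ⟨e', he', rfl⟩, suppress_ends_eq_iff.mp h⟩
  · rintro ⟨e, ⟨e', he', rfl⟩, h⟩
    exact ⟨e', he', suppress_ends_eq_iff.mpr h⟩

lemma suppress_reachable_up {S' : Set {e : E // e ≠ e1 ∧ e ≠ e2}} {a b : {u : V // u ≠ v}}
    (h : (suppress G v e1 e2 hv).Reachable S' a b) :
    G.Reachable (Subtype.val '' S') a.1 b.1 :=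
  Relation.ReflTransGen.lift Subtype.val (fun _ _ hpq => suppress_adj.mp hpq) _ _ h

/-- The retraction sending `v` to a designated vertex `x0 ≠ v`. -/
noncomputable def toSup (v x0 : V) (hx0 : x0 ≠ v) (u : V) : {u : V // u ≠ v} :=
  haveI := Classical.dec (u = v)
  if h : u = v then ⟨x0, hx0⟩ else ⟨u, h⟩

lemma toSup_ne {v x0 : V} {hx0 : x0 ≠ v} {u : V} (h : u ≠ v) :
    toSup v x0 hx0 u = ⟨u, h⟩ := dif_neg h

lemma toSup_self {v x0 : V} {hx0 : x0 ≠ v} : toSup v x0 hx0 v = ⟨x0, hx0⟩ := dif_pos rfl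

lemma suppress_reachable_down {S : Set E} {e0 : E} {x0 : V} (hx0 : x0 ≠ v)
    (h0 : G.ends e0 = s(v, x0))
    (hone : ∀ e ∈ S, v ∈ G.ends e → e = e0)
    (hS : ∀ e ∈ S, e ≠ e0 → e ≠ e1 ∧ e ≠ e2)
    {a b : V} (h : G.Reachable S a b) :
    (suppress G v e1 e2 hv).Reachable {e' | e'.1 ∈ S} (toSup v x0 hx0 a) (toSup v x0 hx0 b) := by
  induction h with
  | refl => exact .refl
  | @tail p q hr step ih =>
      obtain ⟨e, heS, hends⟩ := step
      by_cases hee : e = e0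
      · subst hee
        rw [h0] at hends
        have hpq : toSup v x0 hx0 p = toSup v x0 hx0 q := by
          rcases Sym2.eq_iff.mp hends.symm with ⟨hp, hq⟩ | ⟨hp, hq⟩
          · rw [hp, hq, toSup_self, toSup_ne hx0]
          · rw [hp, hq, toSup_self, toSup_ne hx0]
        rwa [← hpq]
      · have hp : p ≠ v := by
          rintro rfl
          exact hee (hone e heS (by rw [hends]; exact Sym2.mem_mk_left _ _))
        have hq : q ≠ v := by
          rintro rfl
          exact hee (hone e heS (by rw [hends]; exact Sym2.mem_mk_right _ _))
        refine ih.tail ⟨⟨e, hS e heS hee⟩, heS, ?_⟩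
        rw [toSup_ne hp, toSup_ne hq]
        exact suppress_ends_eq_iff.mpr hends

lemma suppress_incEdges {S' : Set {e : E // e ≠ e1 ∧ e ≠ e2}} {u : V} (hu : u ≠ v) :
    G.incEdges (Subtype.val '' S') u
      = Subtype.val '' ((suppress G v e1 e2 hv).incEdges S' ⟨u, hu⟩) := by
  ext e
  simp only [incEdges, Set.mem_setOf_eq, Set.mem_image]
  constructor
  · rintro ⟨⟨e', he', rfl⟩, hm⟩
    exact ⟨e', ⟨he', suppress_mem_ends.mpr hm⟩, rfl⟩
  · rintro ⟨e', ⟨he', hm⟩, rfl⟩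
    exact ⟨⟨e', he', rfl⟩, suppress_mem_ends.mp hm⟩

lemma suppress_deg {S' : Set {e : E // e ≠ e1 ∧ e ≠ e2}} {u : V} (hu : u ≠ v) :
    G.deg (Subtype.val '' S') u = (suppress G v e1 e2 hv).deg S' ⟨u, hu⟩ := by
  unfold deg
  rw [suppress_incEdges (hv := hv) hu,
    Set.ncard_image_of_injective _ Subtype.val_injective]

lemma suppress_isSpanningTree {T : Set E} {e0 : E} {x0 : V} (hx0 : x0 ≠ v)
    (h0 : G.ends e0 = s(v, x0))
    (hone : ∀ e ∈ T, v ∈ G.ends e → e = e0)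
    (hS : ∀ e ∈ T, e ≠ e0 → e ≠ e1 ∧ e ≠ e2)
    (hT : G.IsSpanningTree T) :
    (suppress G v e1 e2 hv).IsSpanningTree {e' | e'.1 ∈ T} := by
  constructor
  · intro a b
    have h := suppress_reachable_down (hv := hv) hx0 h0 hone hS (hT.1 a.1 b.1)
    rwa [toSup_ne a.2, toSup_ne b.2, Subtype.coe_eta, Subtype.coe_eta] at h
  · intro e' he' a b hab hreach
    apply hT.2 e'.1 he' a.1 b.1 (suppress_ends_eq_iff.mp hab)
    have h := suppress_reachable_up (hv := hv) hreach
    refine reachable_mono ?_ h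
    rintro e ⟨eh, ⟨hehT, hehne⟩, rfl⟩
    refine ⟨hehT, fun hh => hehne ?_⟩
    simp only [Set.mem_singleton_iff] at hh ⊢
    exact Subtype.val_injective hh

end Suppress

section Lift

variable {V E : Type*} {G : Multigraph V E} {v : V} {e1 e2 : E}
  {hv : ∀ e : E, v ∈ G.ends e → e = e1 ∨ e = e2}

lemma lift_no_other_incident (hv : ∀ e : E, v ∈ G.ends e → e = e1 ∨ e = e2)
    {S' : Set {e : E // e ≠ e1 ∧ e ≠ e2}} {f : E}
    (hf : f ∈ Subtype.val '' S') : v ∉ G.ends f := by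
  obtain ⟨f', _, rfl⟩ := hf
  intro hm
  rcases hv f'.1 hm with h | h
  exacts [f'.2.1 h, f'.2.2 h]

lemma lift_isSpanningTree {S' : Set {e : E // e ≠ e1 ∧ e ≠ e2}}
    (hS' : (suppress G v e1 e2 hv).IsSpanningTree S')
    {a : E} {xa : V} (ha : G.ends a = s(v, xa)) (hxa : xa ≠ v)
    (haset : a = e1 ∨ a = e2) :
    G.IsSpanningTree (Subtype.val '' S' ∪ {a}) := by
  set U : Set E := Subtype.val '' S' ∪ {a} with hU
  have hcore : ∀ p q : {u : V // u ≠ v}, G.Reachable U p.1 q.1 := fun p q =>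
    reachable_mono Set.subset_union_left (suppress_reachable_up (hv := hv) (hS'.1 p q))
  have hvxa : G.Adj U v xa := ⟨a, Set.mem_union_right _ rfl, ha⟩
  have hv2u : ∀ q : V, q ≠ v → G.Reachable U v q := fun q hq =>
    (Relation.ReflTransGen.single hvxa).trans (hcore ⟨xa, hxa⟩ ⟨q, hq⟩)
  constructor
  · intro p q
    by_cases hp : p = v
    · by_cases hq : q = v
      · rw [hp, hq]; exact .refl
      · rw [hp]; exact hv2u q hq
    · by_cases hq : q = v
      · rw [hq]; exact reachable_symm (hv2u p hp)
      · exact hcore ⟨p, hp⟩ ⟨q, hq⟩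
  · intro e he p q hends hreach
    have hnov : ∀ f ∈ U \ {a}, v ∉ G.ends f := by
      rintro f ⟨hfU, hfa⟩
      rcases hfU with hf | hf
      · exact lift_no_other_incident (hv := hv) hf
      · exact absurd hf hfa
    rcases he with he | he
    · -- e comes from S'
      obtain ⟨e', he', rfl⟩ := he
      have hea : e'.1 ≠ a := by
        rcases haset with rfl | rfl
        exacts [e'.2.1, e'.2.2]
      have hp : p ≠ v := by
        rintro rfl
        rcases hv e'.1 (hends ▸ Sym2.mem_mk_left _ _) with h | h
        exacts [e'.2.1 h, e'.2.2 h]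
      have hq : q ≠ v := by
        rintro rfl
        rcases hv e'.1 (hends ▸ Sym2.mem_mk_right _ _) with h | h
        exacts [e'.2.1 h, e'.2.2 h]
      have hdown := suppress_reachable_down (hv := hv) (S := U \ {e'.1}) (e0 := a)
        hxa ha ?_ ?_ hreach
      · rw [toSup_ne hp, toSup_ne hq] at hdown
        have hsetEq : {f' : {e : E // e ≠ e1 ∧ e ≠ e2} | f'.1 ∈ U \ {e'.1}} = S' \ {e'} := by
          ext f'
          simp only [Set.mem_setOf_eq, Set.mem_diff, Set.mem_singleton_iff]
          constructor
          · rintro ⟨hfU, hfe⟩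
            rcases hfU with hf | hf
            · obtain ⟨f'', hf'', hval⟩ := hf
              have : f'' = f' := Subtype.val_injective hval
              subst this
              exact ⟨hf'', fun hh => hfe (by rw [hh])⟩
            · exfalso
              rcases haset with rfl | rfl
              exacts [f'.2.1 hf, f'.2.2 hf]
          · rintro ⟨hf', hfe⟩
            exact ⟨Set.mem_union_left _ ⟨f', hf', rfl⟩,
              fun hh => hfe (Subtype.val_injective hh)⟩
        rw [hsetEq] at hdown
        exact hS'.2 e' he' ⟨p, hp⟩ ⟨q, hq⟩ (suppress_ends_eq_iff.mpr hends) hdown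
      · intro f hf hvf
        by_contra hfa
        exact hnov f ⟨hf.1, hfa⟩ hvf
      · rintro f ⟨hfU, hfe⟩ hfa
        rcases hfU with hf | hf
        · obtain ⟨f'', _, rfl⟩ := hf
          exact f''.2
        · exact absurd hf hfa
    · -- e = a
      rw [Set.mem_singleton_iff] at he
      rw [he] at hreach hends
      have hra : G.Reachable (U \ {a}) v xa := by
        rw [ha] at hends
        rcases Sym2.eq_iff.mp hends with ⟨hp, hq⟩ | ⟨hp, hq⟩
        · rw [← hp, ← hq] at hreach; exact hreach
        · rw [← hq, ← hp] at hreach; exact reachable_symm hreach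
      obtain ⟨f, hf, hvf⟩ := exists_incident_of_reachable hra (Ne.symm hxa)
      exact hnov f hf hvf

lemma lift_incEdges_v (hv : ∀ e : E, v ∈ G.ends e → e = e1 ∨ e = e2)
    {S' : Set {e : E // e ≠ e1 ∧ e ≠ e2}}
    {a : E} {xa : V} (ha : G.ends a = s(v, xa)) :
    G.incEdges (Subtype.val '' S' ∪ {a}) v = {a} := by
  ext f
  simp only [incEdges, Set.mem_setOf_eq, Set.mem_singleton_iff]
  constructor
  · rintro ⟨hf | hf, hm⟩
    · exact absurd hm (lift_no_other_incident (hv := hv) hf)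
    · exact hf
  · rintro rfl
    exact ⟨Set.mem_union_right _ rfl, by rw [ha]; exact Sym2.mem_mk_left _ _⟩

lemma lift_deg_v [Finite E] (hv : ∀ e : E, v ∈ G.ends e → e = e1 ∨ e = e2)
    {S' : Set {e : E // e ≠ e1 ∧ e ≠ e2}}
    {a : E} {xa : V} (ha : G.ends a = s(v, xa)) :
    G.deg (Subtype.val '' S' ∪ {a}) v = 1 := by
  unfold deg
  rw [lift_incEdges_v hv ha, Set.ncard_singleton]

lemma lift_deg [Finite E] [DecidableEq V] {S' : Set {e : E // e ≠ e1 ∧ e ≠ e2}}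
    {a : E} {xa : V} (ha : G.ends a = s(v, xa)) (hxa : xa ≠ v)
    (haset : a = e1 ∨ a = e2) {u : V} (hu : u ≠ v) :
    G.deg (Subtype.val '' S' ∪ {a}) u
      = (suppress G v e1 e2 hv).deg S' ⟨u, hu⟩ + (if u = xa then 1 else 0) := by
  have hsingle : G.incEdges {a} u = if u = xa then {a} else ∅ := by
    ext f
    simp only [incEdges, Set.mem_setOf_eq, Set.mem_singleton_iff]
    by_cases hux : u = xa
    · simp only [if_pos hux, Set.mem_singleton_iff]
      constructor
      · rintro ⟨rfl, _⟩; rfl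
      · rintro rfl
        exact ⟨rfl, by rw [ha, hux]; exact Sym2.mem_mk_right _ _⟩
    · simp only [if_neg hux, Set.mem_empty_iff_false, iff_false, not_and]
      rintro rfl hm
      rw [ha, Sym2.mem_iff] at hm
      rcases hm with hm | hm
      exacts [hu hm, hux hm]
  have hdisj : Disjoint (Subtype.val '' S') ({a} : Set E) := by
    rw [Set.disjoint_singleton_right]
    rintro ⟨f', _, rfl⟩
    rcases haset with h | h
    exacts [f'.2.1 h, f'.2.2 h]
  rw [deg_union hdisj, suppress_deg (hv := hv) hu]
  congr 1
  unfold deg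
  rw [hsingle]
  by_cases hux : u = xa
  · rw [if_pos hux, if_pos hux, Set.ncard_singleton]
  · rw [if_neg hux, if_neg hux, Set.ncard_empty]

lemma lift_isDTD [Finite E] {S1' S2' : Set {e : E // e ≠ e1 ∧ e ≠ e2}}
    (hDTD : (suppress G v e1 e2 hv).IsDTD S1' S2')
    {a b : E} {xa xb : V} (ha : G.ends a = s(v, xa)) (hb : G.ends b = s(v, xb))
    (hxa : xa ≠ v) (hxb : xb ≠ v) (hab : a ≠ b)
    (hset : a = e1 ∧ b = e2 ∨ a = e2 ∧ b = e1) :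
    G.IsDTD (Subtype.val '' S1' ∪ {a}) (Subtype.val '' S2' ∪ {b}) := by
  have haset : a = e1 ∨ a = e2 := by tauto
  have hbset : b = e1 ∨ b = e2 := by tauto
  refine ⟨?_, ?_, lift_isSpanningTree hDTD.2.2.1 ha hxa haset,
    lift_isSpanningTree hDTD.2.2.2 hb hxb hbset⟩
  · apply Set.eq_univ_iff_forall.mpr
    intro e
    by_cases hea : e = a
    · exact Or.inl (Set.mem_union_right _ hea)
    by_cases heb : e = b
    · exact Or.inr (Set.mem_union_right _ heb)
    have he12 : e ≠ e1 ∧ e ≠ e2 := by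
      rcases hset with ⟨rfl, rfl⟩ | ⟨rfl, rfl⟩
      exacts [⟨hea, heb⟩, ⟨heb, hea⟩]
    have : (⟨e, he12⟩ : {e : E // e ≠ e1 ∧ e ≠ e2}) ∈ S1' ∪ S2' := by
      rw [hDTD.1]; trivial
    rcases this with h | h
    · exact Or.inl (Set.mem_union_left _ ⟨_, h, rfl⟩)
    · exact Or.inr (Set.mem_union_left _ ⟨_, h, rfl⟩)
  · rw [Set.disjoint_left]
    rintro e (⟨e', he', rfl⟩ | he) hmem
    · rcases hmem with hm | hm
      · obtain ⟨e'', he'', hval⟩ := hm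
        have : e'' = e' := Subtype.val_injective hval
        subst this
        exact (Set.disjoint_left.mp hDTD.2.1 he') he''
      · rw [Set.mem_singleton_iff] at hm
        rcases hbset with h | h
        · exact e'.2.1 (hm.trans h)
        · exact e'.2.2 (hm.trans h)
    · rw [Set.mem_singleton_iff] at he
      subst he
      rcases hmem with hm | hm
      · obtain ⟨e'', _, hval⟩ := hm
        rcases haset with h | h
        · exact e''.2.1 (hval.trans h)
        · exact e''.2.2 (hval.trans h)
      · exact hab hm

end Lift

section Key

lemma key_degrees {c n m : ℕ} {G : Multigraph (Fin n) (Fin m)}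
    (hbal : G.NoBalancedDTD c)
    (hsmall : ∀ (n' m' : ℕ) (G' : Multigraph (Fin n') (Fin m')), n' < n →
      G'.IsDoubleTree → ∃ S1 S2, G'.IsDTD S1 S2 ∧ G'.Balanced c S1 S2)
    (hG : G.IsDoubleTree)
    {v x y : Fin n} {e1 e2 : Fin m} (he : e1 ≠ e2)
    (h1 : G.ends e1 = s(v, x)) (h2 : G.ends e2 = s(v, y))
    (hdeg : G.deg Set.univ v = 2) :
    ∃ D1 D2 : Fin n → ℕ,
      (∀ u, u ≠ v → D1 u + D2 u + ((if u = x then 1 else 0) + (if u = y then 1 else 0))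
        = G.deg Set.univ u) ∧
      (∀ u, u ≠ v → |(D1 u : ℤ) - (D2 u : ℤ)| ≤ (c : ℤ)) ∧
      (x ≠ y → 1 ≤ D1 x ∧ 1 ≤ D2 x ∧ 1 ≤ D1 y ∧ 1 ≤ D2 y) ∧
      ¬ (∀ u, u ≠ v → |((D1 u + (if u = x then 1 else 0) : ℕ) : ℤ)
          - ((D2 u + (if u = y then 1 else 0) : ℕ) : ℤ)| ≤ (c : ℤ)) ∧
      ¬ (∀ u, u ≠ v → |((D1 u + (if u = y then 1 else 0) : ℕ) : ℤ)
          - ((D2 u + (if u = x then 1 else 0) : ℕ) : ℤ)| ≤ (c : ℤ)) := by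
  have hvx : v ≠ x := ne_of_ends h1
  have hvy : v ≠ y := ne_of_ends h2
  have hinc : G.incEdges Set.univ v = {e1, e2} := by
    have hsub : ({e1, e2} : Set (Fin m)) ⊆ G.incEdges Set.univ v := by
      rintro e (rfl | rfl)
      · exact ⟨trivial, by rw [h1]; exact Sym2.mem_mk_left _ _⟩
      · exact ⟨trivial, by rw [h2]; exact Sym2.mem_mk_left _ _⟩
    have hle : (G.incEdges Set.univ v).ncard ≤ ({e1, e2} : Set (Fin m)).ncard := by
      rw [Set.ncard_pair he]
      exact le_of_eq hdeg
    exact (Set.eq_of_subset_of_ncard_le hsub hle (Set.toFinite _)).symm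
  have hv : ∀ e : Fin m, v ∈ G.ends e → e = e1 ∨ e = e2 := by
    intro e hm
    have : e ∈ G.incEdges Set.univ v := ⟨trivial, hm⟩
    rw [hinc] at this
    simpa using this
  -- reduce to the case `e1 ∈ T1`, `e2 ∈ T2`
  obtain ⟨T1, T2, hT⟩ := hG
  have hopp : ∀ {A B : Set (Fin m)}, G.IsDTD A B → e1 ∈ A → e2 ∈ B := by
    intro A B hAB h1A
    have h2m : e2 ∈ A ∪ B := by rw [hAB.1]; trivial
    rcases h2m with h2A | h2B
    · exfalso
      obtain ⟨e, heB, hem⟩ := exists_incident_of_reachable (hAB.2.2.2.1 v x) hvx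
      rcases hv e hem with rfl | rfl
      · exact (Set.disjoint_left.mp hAB.2.1 h1A) heB
      · exact (Set.disjoint_left.mp hAB.2.1 h2A) heB
    · exact h2B
  have h1m : e1 ∈ T1 ∪ T2 := by rw [hT.1]; trivial
  have main : ∀ A B : Set (Fin m), G.IsDTD A B → e1 ∈ A → e2 ∈ B →
      ∃ D1 D2 : Fin n → ℕ,
      (∀ u, u ≠ v → D1 u + D2 u + ((if u = x then 1 else 0) + (if u = y then 1 else 0))
        = G.deg Set.univ u) ∧
      (∀ u, u ≠ v → |(D1 u : ℤ) - (D2 u : ℤ)| ≤ (c : ℤ)) ∧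
      (x ≠ y → 1 ≤ D1 x ∧ 1 ≤ D2 x ∧ 1 ≤ D1 y ∧ 1 ≤ D2 y) ∧
      ¬ (∀ u, u ≠ v → |((D1 u + (if u = x then 1 else 0) : ℕ) : ℤ)
          - ((D2 u + (if u = y then 1 else 0) : ℕ) : ℤ)| ≤ (c : ℤ)) ∧
      ¬ (∀ u, u ≠ v → |((D1 u + (if u = y then 1 else 0) : ℕ) : ℤ)
          - ((D2 u + (if u = x then 1 else 0) : ℕ) : ℤ)| ≤ (c : ℤ)) := by
    clear hT h1m
    intro T1 T2 hT h1T h2T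
    set H := suppress G v e1 e2 hv with hH
    set HT1 : Set {e : Fin m // e ≠ e1 ∧ e ≠ e2} := {e' | e'.1 ∈ T1} with hHT1
    set HT2 : Set {e : Fin m // e ≠ e1 ∧ e ≠ e2} := {e' | e'.1 ∈ T2} with hHT2
    have hST1 : H.IsSpanningTree HT1 := by
      refine suppress_isSpanningTree (Ne.symm hvx) h1 ?_ ?_ hT.2.2.1
      · intro e heT hm
        rcases hv e hm with h | h
        · exact h
        · exfalso
          rw [h] at heT
          exact (Set.disjoint_left.mp hT.2.1 heT) h2T
      · intro e heT hne
        refine ⟨hne, fun hh => ?_⟩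
        rw [hh] at heT
        exact (Set.disjoint_left.mp hT.2.1 heT) h2T
    have hST2 : H.IsSpanningTree HT2 := by
      refine suppress_isSpanningTree (Ne.symm hvy) h2 ?_ ?_ hT.2.2.2
      · intro e heT hm
        rcases hv e hm with h | h
        · exfalso
          rw [h] at heT
          exact (Set.disjoint_left.mp hT.2.1 h1T) heT
        · exact h
      · intro e heT hne
        refine ⟨fun hh => ?_, hne⟩
        rw [hh] at heT
        exact (Set.disjoint_left.mp hT.2.1 h1T) heT
    have hHdtd : H.IsDTD HT1 HT2 := by
      refine ⟨?_, ?_, hST1, hST2⟩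
      · apply Set.eq_univ_iff_forall.mpr
        intro e'
        have : e'.1 ∈ T1 ∪ T2 := by rw [hT.1]; trivial
        exact this
      · rw [Set.disjoint_left]
        intro e' hA hB
        exact (Set.disjoint_left.mp hT.2.1 hA) hB
    -- transport to `Fin` types and use minimality
    set EqV := Fintype.equivFin {u : Fin n // u ≠ v} with hEqV
    set EqE := Fintype.equivFin {e : Fin m // e ≠ e1 ∧ e ≠ e2} with hEqE
    set G'' := H.mapEquiv EqV EqE with hG''
    have hcard : Fintype.card {u : Fin n // u ≠ v} < n := by
      have := Fintype.card_subtype_lt (p := fun u : Fin n => u ≠ v) (x := v) (by simp)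
      simpa using this
    have hDT'' : G''.IsDoubleTree := by
      refine ⟨EqE '' HT1, EqE '' HT2, (mapEquiv_isDTD H EqV EqE).mpr ?_⟩
      rw [Set.preimage_image_eq _ EqE.injective, Set.preimage_image_eq _ EqE.injective]
      exact hHdtd
    obtain ⟨S1'', S2'', hdtd'', hbal''⟩ := hsmall _ _ G'' hcard hDT''
    set S1' := EqE ⁻¹' S1'' with hS1'
    set S2' := EqE ⁻¹' S2'' with hS2'
    have hdtd' : H.IsDTD S1' S2' := (mapEquiv_isDTD H EqV EqE).mp hdtd''
    have hbal' : H.Balanced c S1' S2' := (mapEquiv_balanced H EqV EqE).mp hbal''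
    refine ⟨fun u => if h : u = v then 0 else H.deg S1' ⟨u, h⟩,
            fun u => if h : u = v then 0 else H.deg S2' ⟨u, h⟩, ?_, ?_, ?_, ?_, ?_⟩
    · -- degree sum formula
      intro u hu
      simp only [dif_neg hu]
      have hHsum : H.deg S1' ⟨u, hu⟩ + H.deg S2' ⟨u, hu⟩ = H.deg Set.univ ⟨u, hu⟩ :=
        deg_add_deg hdtd'.2.1 hdtd'.1 _
      have hval : Subtype.val '' (Set.univ : Set {e : Fin m // e ≠ e1 ∧ e ≠ e2})
          = {e | e ≠ e1 ∧ e ≠ e2} := Subtype.coe_image_univ _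
      have hsupdeg : G.deg {e | e ≠ e1 ∧ e ≠ e2} u = H.deg Set.univ ⟨u, hu⟩ := by
        rw [← hval]
        exact suppress_deg hu
      have hsplit : G.deg {e | e ≠ e1 ∧ e ≠ e2} u + G.deg {e1, e2} u
          = G.deg Set.univ u := by
        refine deg_add_deg ?_ ?_ u
        · rw [Set.disjoint_left]
          rintro e hee (rfl | rfl)
          · exact hee.1 rfl
          · exact hee.2 rfl
        · ext e
          simp only [Set.mem_union, Set.mem_setOf_eq, Set.mem_insert_iff,
            Set.mem_singleton_iff, Set.mem_univ, iff_true]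
          tauto
      have hmem1 : ∀ w : Fin n, w ≠ v → (w ∈ G.ends e1 ↔ w = x) := by
        intro w hw
        rw [h1, Sym2.mem_iff]
        exact ⟨fun hh => hh.resolve_left hw, fun hh => Or.inr hh⟩
      have hmem2 : ∀ w : Fin n, w ≠ v → (w ∈ G.ends e2 ↔ w = y) := by
        intro w hw
        rw [h2, Sym2.mem_iff]
        exact ⟨fun hh => hh.resolve_left hw, fun hh => Or.inr hh⟩
      have hpair : G.deg {e1, e2} u
          = (if u = x then 1 else 0) + (if u = y then 1 else 0) := by
        unfold deg
        by_cases hux : u = x <;> by_cases huy : u = y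
        · have : G.incEdges {e1, e2} u = {e1, e2} := by
            ext e
            simp only [incEdges, Set.mem_setOf_eq, Set.mem_insert_iff,
              Set.mem_singleton_iff]
            constructor
            · exact fun hh => hh.1
            · rintro (rfl | rfl)
              · exact ⟨Or.inl rfl, (hmem1 u hu).mpr hux⟩
              · exact ⟨Or.inr rfl, (hmem2 u hu).mpr huy⟩
          rw [this, Set.ncard_pair he, if_pos hux, if_pos huy]
        · have : G.incEdges {e1, e2} u = {e1} := by
            ext e
            simp only [incEdges, Set.mem_setOf_eq, Set.mem_insert_iff,
              Set.mem_singleton_iff]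
            constructor
            · rintro ⟨rfl | rfl, hm⟩
              · rfl
              · exact absurd ((hmem2 u hu).mp hm) huy
            · rintro rfl
              exact ⟨Or.inl rfl, (hmem1 u hu).mpr hux⟩
          rw [this, Set.ncard_singleton, if_pos hux, if_neg huy]
        · have : G.incEdges {e1, e2} u = {e2} := by
            ext e
            simp only [incEdges, Set.mem_setOf_eq, Set.mem_insert_iff,
              Set.mem_singleton_iff]
            constructor
            · rintro ⟨rfl | rfl, hm⟩
              · exact absurd ((hmem1 u hu).mp hm) hux
              · rfl
            · rintro rfl
              exact ⟨Or.inr rfl, (hmem2 u hu).mpr huy⟩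
          rw [this, Set.ncard_singleton, if_neg hux, if_pos huy]
        · have : G.incEdges {e1, e2} u = ∅ := by
            ext e
            simp only [incEdges, Set.mem_setOf_eq, Set.mem_insert_iff,
              Set.mem_singleton_iff, Set.mem_empty_iff_false, iff_false, not_and]
            rintro (rfl | rfl)
            · exact fun hm => hux ((hmem1 u hu).mp hm)
            · exact fun hm => huy ((hmem2 u hu).mp hm)
          rw [this, Set.ncard_empty, if_neg hux, if_neg huy]
      omega
    · -- balancedness
      intro u hu
      simp only [dif_neg hu]
      exact hbal' ⟨u, hu⟩
    · -- positive degrees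
      intro hxy
      have hxv : x ≠ v := Ne.symm hvx
      have hyv : y ≠ v := Ne.symm hvy
      have hne : (⟨x, hxv⟩ : {u : Fin n // u ≠ v}) ≠ ⟨y, hyv⟩ :=
        fun hh => hxy (congrArg Subtype.val hh)
      refine ⟨?_, ?_, ?_, ?_⟩
      · simp only [dif_neg hxv]; exact one_le_deg (hdtd'.2.2.1.1 ⟨x, hxv⟩ ⟨y, hyv⟩) hne
      · simp only [dif_neg hxv]; exact one_le_deg (hdtd'.2.2.2.1 ⟨x, hxv⟩ ⟨y, hyv⟩) hne
      · simp only [dif_neg hyv]; exact one_le_deg (hdtd'.2.2.1.1 ⟨y, hyv⟩ ⟨x, hxv⟩) hne.symm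
      · simp only [dif_neg hyv]; exact one_le_deg (hdtd'.2.2.2.1 ⟨y, hyv⟩ ⟨x, hxv⟩) hne.symm
    · -- first orientation yields a balanced DTD, contradiction
      intro hyp
      apply hbal
      refine ⟨Subtype.val '' S1' ∪ {e1}, Subtype.val '' S2' ∪ {e2},
        lift_isDTD hdtd' h1 h2 (Ne.symm hvx) (Ne.symm hvy) he (Or.inl ⟨rfl, rfl⟩), ?_⟩
      intro u
      by_cases hu : u = v
      · rw [hu, lift_deg_v hv h1, lift_deg_v hv h2]
        simp
      · rw [lift_deg (hv := hv) h1 (Ne.symm hvx) (Or.inl rfl) hu,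
          lift_deg (hv := hv) h2 (Ne.symm hvy) (Or.inr rfl) hu]
        have := hyp u hu
        simp only [dif_neg hu] at this
        exact this
    · -- second orientation yields a balanced DTD, contradiction
      intro hyp
      apply hbal
      refine ⟨Subtype.val '' S1' ∪ {e2}, Subtype.val '' S2' ∪ {e1},
        lift_isDTD hdtd' h2 h1 (Ne.symm hvy) (Ne.symm hvx) (Ne.symm he)
          (Or.inr ⟨rfl, rfl⟩), ?_⟩
      intro u
      by_cases hu : u = v
      · rw [hu, lift_deg_v hv h2, lift_deg_v hv h1]
        simp
      · rw [lift_deg (hv := hv) h2 (Ne.symm hvy) (Or.inr rfl) hu,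
          lift_deg (hv := hv) h1 (Ne.symm hvx) (Or.inl rfl) hu]
        have := hyp u hu
        simp only [dif_neg hu] at this
        exact this
  rcases h1m with h1A | h1A
  · exact main T1 T2 hT h1A (hopp hT h1A)
  · have hTswap : G.IsDTD T2 T1 :=
      ⟨by rw [Set.union_comm]; exact hT.1, hT.2.1.symm, hT.2.2.2, hT.2.2.1⟩
    exact main T2 T1 hTswap h1A (hopp hTswap h1A)

end Key

end Multigraph

/-- **Theorem (Statement 6).** In a vertex-minimal double tree `G` with no
`c`-balanced double tree decomposition (`c ≥ 2`), the two neighbours `x`, `y`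
of any 2-vertex `v` are distinct, big, and have degrees `≡ c + 1 (mod 2)`. -/
theorem two_vertex_neighbours (c : ℕ) (hc : 2 ≤ c) (n m : ℕ)
    (G : Multigraph (Fin n) (Fin m))
    (hG : G.IsDoubleTree) (hbal : G.NoBalancedDTD c)
    (hmin : ∀ (n' m' : ℕ) (G' : Multigraph (Fin n') (Fin m')),
      G'.IsDoubleTree → G'.NoBalancedDTD c → n ≤ n')
    (v x y : Fin n) (e1 e2 : Fin m) (he : e1 ≠ e2)
    (h1 : G.ends e1 = s(v, x)) (h2 : G.ends e2 = s(v, y))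
    (hdeg : G.deg Set.univ v = 2) :
    x ≠ y ∧ G.Big c x ∧ G.Big c y ∧
      G.deg Set.univ x % 2 = (c + 1) % 2 ∧
      G.deg Set.univ y % 2 = (c + 1) % 2 := by
  have hsmall : ∀ (n' m' : ℕ) (G' : Multigraph (Fin n') (Fin m')), n' < n →
      G'.IsDoubleTree → ∃ S1 S2, G'.IsDTD S1 S2 ∧ G'.Balanced c S1 S2 := by
    intro n' m' G' hlt hDT
    by_contra h
    exact absurd (hmin n' m' G' hDT h) (not_le.mpr hlt)
  obtain ⟨D1, D2, hA, hB, hC, hd1, hd2⟩ :=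
    Multigraph.key_degrees hbal hsmall hG he h1 h2 hdeg
  have hvx : v ≠ x := Multigraph.ne_of_ends h1
  have hvy : v ≠ y := Multigraph.ne_of_ends h2
  -- Step 1: x ≠ y
  have hxy : x ≠ y := by
    intro hxyeq
    subst hxyeq
    apply hd1
    intro u hu
    have hb := hB u hu
    rw [abs_le] at hb ⊢
    by_cases hux : u = x
    · rw [if_pos hux]
      push_cast; omega
    · rw [if_neg hux]
      push_cast; omega
  -- Orientation arguments
  have contraX : ¬ |(D1 x : ℤ) - (D2 x : ℤ)| < (c : ℤ) := by
    intro hlt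
    rw [abs_lt] at hlt
    by_cases hsign : (D2 y : ℤ) ≤ (D1 y : ℤ)
    · apply hd1
      intro u hu
      have hb := hB u hu
      rw [abs_le] at hb ⊢
      by_cases hux : u = x
      · subst hux
        rw [if_pos rfl, if_neg hxy]
        push_cast; omega
      · by_cases huy : u = y
        · subst huy
          rw [if_neg hux, if_pos rfl]
          push_cast; omega
        · rw [if_neg hux, if_neg huy]
          push_cast; omega
    · apply hd2
      intro u hu
      have hb := hB u hu
      rw [abs_le] at hb ⊢
      by_cases hux : u = x
      · subst hux
        rw [if_neg hxy, if_pos rfl]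
        push_cast; omega
      · by_cases huy : u = y
        · subst huy
          rw [if_pos rfl, if_neg hux]
          push_cast; omega
        · rw [if_neg huy, if_neg hux]
          push_cast; omega
  have contraY : ¬ |(D1 y : ℤ) - (D2 y : ℤ)| < (c : ℤ) := by
    intro hlt
    rw [abs_lt] at hlt
    by_cases hsign : (D2 x : ℤ) ≤ (D1 x : ℤ)
    · apply hd2
      intro u hu
      have hb := hB u hu
      rw [abs_le] at hb ⊢
      by_cases hux : u = x
      · subst hux
        rw [if_neg hxy, if_pos rfl]
        push_cast; omega
      · by_cases huy : u = y
        · subst huy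
          rw [if_pos rfl, if_neg hux]
          push_cast; omega
        · rw [if_neg huy, if_neg hux]
          push_cast; omega
    · apply hd1
      intro u hu
      have hb := hB u hu
      rw [abs_le] at hb ⊢
      by_cases hux : u = x
      · subst hux
        rw [if_pos rfl, if_neg hxy]
        push_cast; omega
      · by_cases huy : u = y
        · subst huy
          rw [if_neg hux, if_pos rfl]
          push_cast; omega
        · rw [if_neg hux, if_neg huy]
          push_cast; omega
  -- degree sum formulas at x and y
  have hdegx : D1 x + D2 x + 1 = G.deg Set.univ x := by
    have := hA x (Ne.symm hvx)
    rw [if_pos rfl, if_neg hxy] at this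
    omega
  have hdegy : D1 y + D2 y + 1 = G.deg Set.univ y := by
    have := hA y (Ne.symm hvy)
    rw [if_neg (Ne.symm hxy), if_pos rfl] at this
    omega
  obtain ⟨hC1, hC2, hC3, hC4⟩ := hC hxy
  have hBx := hB x (Ne.symm hvx)
  have hBy := hB y (Ne.symm hvy)
  rw [abs_le] at hBx hBy
  -- bigness
  have hbigx : G.Big c x := by
    rw [Multigraph.Big]
    by_contra hsm
    apply contraX
    rw [abs_lt]
    push_cast
    omega
  have hbigy : G.Big c y := by
    rw [Multigraph.Big]
    by_contra hsm
    apply contraY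
    rw [abs_lt]
    push_cast
    omega
  -- parity
  have hparx : G.deg Set.univ x % 2 = (c + 1) % 2 := by
    by_contra hp
    apply contraX
    rw [abs_lt]
    push_cast
    omega
  have hpary : G.deg Set.univ y % 2 = (c + 1) % 2 := by
    by_contra hp
    apply contraY
    rw [abs_lt]
    push_cast
    omega
  exact ⟨hxy, hbigx, hbigy, hparx, hpary⟩
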